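/- For all 1 ≤ m ≤ n one has A_{n,m}^{s,id} = (1/m!) · C(n+m−1, 2m−1) and A_{n,m}^{id,1} = C(n+m−1, 2m−1), where C(·,·) is the binomial coefficient, s(n) = n², and id(n) = n. -/

import Mathlib

/-- The polynomials `P_n^{g,h}` defined by `P_0 = 1` and
`P_n(x) = (x / h(n)) * ∑_{k=1}^n g(k) P_{n-k}(x)` for `n ≥ 1`. -/
noncomputable def HVP (g h : ℕ → ℝ) : ℕ → Polynomial ℝ
  | 0 => 1
  | (n + 1) =>
      Polynomial.C (h (n + 1))⁻¹ * Polynomial.X *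
        ∑ k ∈ (Finset.Icc 1 (n + 1)).attach, Polynomial.C (g k.1) * HVP g h (n + 1 - k.1)
  decreasing_by
    have := (Finset.mem_Icc.mp k.2).1
    omega

/-- `A_{n,m}^{g,h}`, the coefficient of `x^m` in `P_n^{g,h}(x)`.
(It vanishes automatically unless `1 ≤ m ≤ n`, except `A_{0,0} = 1`.) -/
noncomputable def HVA (g h : ℕ → ℝ) (n m : ℕ) : ℝ := (HVP g h n).coeff m

lemma HVP_succ (g h : ℕ → ℝ) (n : ℕ) : HVP g h (n+1) =
    Polynomial.C (h (n + 1))⁻¹ * Polynomial.X *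
      ∑ k ∈ Finset.Icc 1 (n + 1), Polynomial.C (g k) * HVP g h (n + 1 - k) := by
  rw [HVP, Finset.sum_attach (Finset.Icc 1 (n+1)) (fun k => Polynomial.C (g k) * HVP g h (n + 1 - k))]

lemma HVA_succ (g h : ℕ → ℝ) (n m : ℕ) : HVA g h (n+1) (m+1) =
    (h (n + 1))⁻¹ * ∑ k ∈ Finset.Icc 1 (n + 1), g k * HVA g h (n + 1 - k) m := by
  rw [HVA, HVP_succ, mul_assoc, Polynomial.coeff_C_mul, Polynomial.coeff_X_mul,
    Polynomial.finset_sum_coeff]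
  simp only [Polynomial.coeff_C_mul, HVA]

lemma HVA_zero_right (g h : ℕ → ℝ) (n : ℕ) : HVA g h (n+1) 0 = 0 := by
  rw [HVA, HVP_succ, Polynomial.mul_coeff_zero, Polynomial.mul_coeff_zero]
  simp

lemma HVA_zero_left (g h : ℕ → ℝ) (m : ℕ) : HVA g h 0 m = if m = 0 then 1 else 0 := by
  rw [HVA, HVP]
  simp [Polynomial.coeff_one]

lemma HVA_eq_zero_of_lt (g h : ℕ → ℝ) : ∀ n m, n < m → HVA g h n m = 0 := by
  intro n
  induction n using Nat.strong_induction_on with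
  | _ n ih =>
    intro m hm
    match n, m with
    | 0, m + 1 => simp [HVA_zero_left]
    | n + 1, m + 1 =>
      rw [HVA_succ]
      rw [Finset.sum_congr rfl (fun k hk => ?_), Finset.sum_const_zero, mul_zero]
      have hk1 := (Finset.mem_Icc.mp hk).1
      rw [ih (n + 1 - k) (by omega) m (by omega), mul_zero]

lemma hs (r t : ℕ) : ∑ j ∈ Finset.range t, (r + j).choose r = (r + t).choose (r + 1) := by
  induction t with
  | zero => simp
  | succ t ih =>
      rw [Finset.sum_range_succ, ih]
      show _ = ((r + t) + 1).choose (r + 1)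
      rw [Nat.choose_succ_succ (r + t) r]
      simp only [Nat.succ_eq_add_one]
      omega

lemma L1 (r t : ℕ) : ∑ j ∈ Finset.range t, (t - j) * (r + j).choose r = (r + t + 1).choose (r + 2) := by
  induction t with
  | zero => simp [Nat.choose_eq_zero_of_lt]
  | succ t ih =>
      have e1 : ∀ j ∈ Finset.range (t+1), (t + 1 - j) * (r + j).choose r
          = (t - j) * (r + j).choose r + (r + j).choose r := by
        intro j hj
        have := Finset.mem_range.mp hj
        have h1 : t + 1 - j = (t - j) + 1 := by omega
        rw [h1, add_mul, one_mul]
      rw [Finset.sum_congr rfl e1, Finset.sum_add_distrib,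
        Finset.sum_range_succ (fun j => (t - j) * (r + j).choose r), Nat.sub_self, zero_mul,
        add_zero, ih, hs]
      show _ = ((r + t + 1) + 1).choose (r + 2)
      rw [Nat.choose_succ_succ (r + t + 1) (r + 1)]
      have : r + (t + 1) = r + t + 1 := by ring
      rw [this]
      simp only [Nat.succ_eq_add_one]
      rw [show r + 1 + 1 = r + 2 from by omega]
      omega

lemma L2 (r t : ℕ) : (r + 3) * ∑ j ∈ Finset.range t, (t - j)^2 * (r + j).choose r
    = (2 * t + r + 1) * (r + t + 1).choose (r + 2) := by
  induction t with
  | zero => simp [Nat.choose_eq_zero_of_lt]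
  | succ t ih =>
      have e1 : ∀ j ∈ Finset.range (t+1), (t + 1 - j)^2 * (r + j).choose r
          = (t - j)^2 * (r + j).choose r + 2 * ((t - j) * (r + j).choose r) + (r + j).choose r := by
        intro j hj
        have := Finset.mem_range.mp hj
        have h1 : t + 1 - j = (t - j) + 1 := by omega
        rw [h1]; ring
      rw [Finset.sum_congr rfl e1, Finset.sum_add_distrib, Finset.sum_add_distrib,
        Finset.sum_range_succ (fun j => (t - j)^2 * (r + j).choose r), Nat.sub_self,
        Finset.sum_range_succ (fun j => 2 * ((t - j) * (r + j).choose r)), Nat.sub_self,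
        ← Finset.mul_sum, L1, hs]
      have ha : r + (t + 1) = r + t + 1 := by ring
      rw [ha]
      have key : (r + t + 1).choose (r + 2) * (r + 2) = (r + t + 1).choose (r + 1) * t := by
        rw [Nat.choose_succ_right_eq (r + t + 1) (r + 1)]
        congr 1
        omega
      have pascal : (r + t + 1 + 1).choose (r + 2) = (r + t + 1).choose (r + 1) + (r + t + 1).choose (r + 2) := by
        rw [Nat.choose_succ_succ (r + t + 1) (r + 1)]
      rw [pascal]
      norm_num
      nlinarith [key, ih]

lemma sum_Icc_eq_range {M : Type*} [AddCommMonoid M] (f : ℕ → M) (t : ℕ) :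
    ∑ k ∈ Finset.Icc 1 t, f k = ∑ j ∈ Finset.range t, f (j + 1) := by
  induction t with
  | zero => simp
  | succ t ih => rw [Finset.sum_Icc_succ_top (by omega), ih, Finset.sum_range_succ]

lemma NL1 (m t : ℕ) :
    ∑ k ∈ Finset.Icc 1 t, k * (t + m + 1 - k + m).choose (2*m+1)
      = (t + 2*m + 2).choose (2*m+3) := by
  rw [sum_Icc_eq_range, ← Finset.sum_range_reflect]
  rw [Finset.sum_congr rfl (fun j hj => ?_), L1 (2*m+1) t]
  · congr 1
    omega
  · have := Finset.mem_range.mp hj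
    congr 1
    · omega
    · congr 1
      omega

lemma NL2 (m t : ℕ) :
    (2*m + 4) * ∑ k ∈ Finset.Icc 1 t, k^2 * (t + m + 1 - k + m).choose (2*m+1)
      = 2 * (t + m + 1) * (t + 2*m + 2).choose (2*m+3) := by
  rw [sum_Icc_eq_range, ← Finset.sum_range_reflect]
  rw [Finset.sum_congr rfl (fun j hj => ?_)]
  · rw [show 2*m + 4 = (2*m+1) + 3 from by omega, L2 (2*m+1) t]
    rw [show (2*m+1) + t + 1 = t + 2*m + 2 from by omega,
      show (2*m+1) + 2 = 2*m + 3 from by omega]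
    ring_nf
  · have := Finset.mem_range.mp hj
    congr 1
    · congr 1
      omega
    · congr 1
      omega

lemma sum_single (g h : ℕ → ℝ) (n : ℕ) :
    ∑ k ∈ Finset.Icc 1 (n+1), g k * HVA g h (n + 1 - k) 0 = g (n+1) := by
  rw [Finset.sum_eq_single_of_mem (n+1) (by simp)]
  · rw [Nat.sub_self, HVA_zero_left]
    simp
  · intro k hk hne
    have hk1 := Finset.mem_Icc.mp hk
    obtain ⟨j, hj⟩ : ∃ j, n + 1 - k = j + 1 := ⟨n - k, by omega⟩
    rw [hj, HVA_zero_right, mul_zero]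

lemma sum_reduce (g h : ℕ → ℝ) (F : ℕ → ℝ) (m t : ℕ)
    (hF : ∀ k, 1 ≤ k → k ≤ t → HVA g h (t + m + 1 - k) (m+1) = F k) :
    ∑ k ∈ Finset.Icc 1 (t + m + 1), g k * HVA g h (t + m + 1 - k) (m+1)
      = ∑ k ∈ Finset.Icc 1 t, g k * F k := by
  rw [← Finset.sum_subset (Finset.Icc_subset_Icc_right (by omega : t ≤ t + m + 1))]
  · exact Finset.sum_congr rfl fun k hk => by
      have hk1 := Finset.mem_Icc.mp hk
      rw [hF k hk1.1 hk1.2]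
  · intro k hk hnk
    have hk1 := Finset.mem_Icc.mp hk
    have hk2 : ¬ (1 ≤ k ∧ k ≤ t) := by simpa using hnk
    rw [HVA_eq_zero_of_lt g h (t + m + 1 - k) (m+1) (by omega), mul_zero]

lemma key : ∀ m n : ℕ, m + 1 ≤ n →
    HVA (fun k => (k : ℝ)^2) (fun k => (k : ℝ)) n (m+1)
      = ((n + m).choose (2*m+1) : ℝ) / (Nat.factorial (m+1) : ℝ) ∧
    HVA (fun k => (k : ℝ)) (fun _ => 1) n (m+1) = ((n + m).choose (2*m+1) : ℝ) := by
  intro m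
  induction m with
  | zero =>
      intro n hn
      obtain ⟨n', rfl⟩ : ∃ n', n = n' + 1 := ⟨n - 1, by omega⟩
      have hn0 : ((n' + 1 : ℕ) : ℝ) ≠ 0 := by positivity
      rw [show n' + 1 + 0 = n' + 1 from rfl, show 2*0+1 = 1 from rfl, Nat.choose_one_right]
      constructor
      · rw [HVA_succ, sum_single]
        simp only [Nat.factorial_one, Nat.cast_one]
        field_simp
      · rw [HVA_succ, sum_single]
        simp
  | succ m ih =>
      intro n hn
      obtain ⟨t, rfl⟩ : ∃ t, n = t + m + 2 := ⟨n - m - 2, by omega⟩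
      obtain ⟨n', hn'⟩ : ∃ n', t + m + 2 = n' + 1 := ⟨t + m + 1, by ring⟩
      have hne : t + m + 2 = t + 1 + m + 1 := by ring
      constructor
      · rw [hn', HVA_succ, ← hn', hne, show 2*(m+1)+1 = 2*m+3 from by ring,
          show t + 1 + m + 1 + (m + 1) = t + 1 + 2*m + 2 from by ring]
        rw [sum_reduce _ _ (fun k => (((t + 1) + m + 1 - k + m).choose (2*m+1) : ℝ)
            / (Nat.factorial (m+1) : ℝ)) m (t+1)
          (fun k hk1 hk2 => (ih ((t + 1) + m + 1 - k) (by omega)).1)]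
        have hsum : ∑ k ∈ Finset.Icc 1 (t+1), ((k : ℝ))^2 *
            ((((t + 1) + m + 1 - k + m).choose (2*m+1) : ℝ) / (Nat.factorial (m+1) : ℝ))
            = ((∑ k ∈ Finset.Icc 1 (t+1), k^2 * ((t + 1) + m + 1 - k + m).choose (2*m+1) : ℕ) : ℝ)
              / (Nat.factorial (m+1) : ℝ) := by
          rw [Nat.cast_sum, Finset.sum_div]
          exact Finset.sum_congr rfl fun k _ => by push_cast; ring
        rw [hsum]
        have h2 := NL2 m (t+1)
        have h2r : (2*(m:ℝ)+4) *
            ((∑ k ∈ Finset.Icc 1 (t+1), k^2 * ((t + 1) + m + 1 - k + m).choose (2*m+1) : ℕ) : ℝ)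
            = 2*((t:ℝ)+1+(m:ℝ)+1)*(((t + 1 + 2*m + 2).choose (2*m+3) : ℕ) : ℝ) := by
          exact_mod_cast congrArg (Nat.cast : ℕ → ℝ) h2
        rw [show (m+1)+1 = m+2 from rfl]
        have hfac : (Nat.factorial (m+2) : ℝ) = ((m:ℝ) + 2) * (Nat.factorial (m+1) : ℝ) := by
          rw [Nat.factorial_succ (m+1)]
          push_cast
          ring
        rw [hfac, show ((t+1+m+1 : ℕ) : ℝ) = (t:ℝ)+m+2 from by push_cast; ring]
        have hfz : (Nat.factorial (m+1) : ℝ) ≠ 0 := by positivity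
        have hnz : ((t : ℝ) + m + 2) ≠ 0 := by positivity
        generalize hgS : ((∑ k ∈ Finset.Icc 1 (t+1), k^2 * ((t + 1) + m + 1 - k + m).choose (2*m+1) : ℕ) : ℝ) = S at h2r ⊢
        generalize hgC : (((t + 1 + 2*m + 2).choose (2*m+3) : ℕ) : ℝ) = C at h2r ⊢
        field_simp
        nlinarith [h2r]
      · rw [hn', HVA_succ, ← hn', hne, show 2*(m+1)+1 = 2*m+3 from by ring,
          show t + 1 + m + 1 + (m + 1) = t + 1 + 2*m + 2 from by ring]
        rw [sum_reduce _ _ (fun k => (((t + 1) + m + 1 - k + m).choose (2*m+1) : ℝ)) m (t+1)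
          (fun k hk1 hk2 => (ih ((t + 1) + m + 1 - k) (by omega)).2)]
        have hsum : ∑ k ∈ Finset.Icc 1 (t+1), ((k : ℝ)) *
            ((((t + 1) + m + 1 - k + m).choose (2*m+1) : ℝ))
            = ((∑ k ∈ Finset.Icc 1 (t+1), k * ((t + 1) + m + 1 - k + m).choose (2*m+1) : ℕ) : ℝ) := by
          push_cast
          rfl
        rw [hsum, NL1 m (t+1)]
        simp

/-- `A_{n,m}^{s,id} = (1/m!) · C(n+m-1, 2m-1)` and `A_{n,m}^{id,1} = C(n+m-1, 2m-1)`
for `1 ≤ m ≤ n`, where `s(n) = n²`. -/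
theorem A_s_id_and_A_id_one (n m : ℕ) (hm : 1 ≤ m) (hmn : m ≤ n) :
    HVA (fun k => (k : ℝ) ^ 2) (fun k => (k : ℝ)) n m
      = (1 / (Nat.factorial m : ℝ)) * (Nat.choose (n + m - 1) (2 * m - 1) : ℝ) ∧
    HVA (fun k => (k : ℝ)) (fun _ => 1) n m
      = (Nat.choose (n + m - 1) (2 * m - 1) : ℝ) := by
  obtain ⟨m', rfl⟩ : ∃ m', m = m' + 1 := ⟨m - 1, by omega⟩
  obtain ⟨h1, h2⟩ := key m' n (by omega)
  rw [show n + (m' + 1) - 1 = n + m' from by omega,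
    show 2 * (m' + 1) - 1 = 2 * m' + 1 from by omega]
  exact ⟨by rw [h1]; ring, h2⟩
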